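/- arXiv:0912.5277 — 5 statements merged into one kernel-verified Lean document; each statement's English description precedes it below -/
import Mathlib

section
/- Let X be a Banach space, (Ω,𝓕,ℙ) and (S,𝒜,P) probability spaces, Ψ: Ω×X→ℝ a jointly measurable mapping, and {W^ε, ε>0} a family of X-valued random variables defined on (S,𝒜,P). Assume: (i) x ↦ Ψ(ω,x) is continuous in ℙ-probability (if x_n → x in X then Ψ(·,x_n) → Ψ(·,x) in ℙ-probability); (ii) for each x ∈ X, ω ↦ Ψ(ω,x) is 𝓕-measurable; (iii) for some δ>0 the family of S-random variables {s ↦ 𝔼|Ψ(·,W^ε(s))|^{1+δ}, ε>0} is a.s. finite and tight. If W^ε converges in distribution to an X-valued random variable W, then the S-random variable s ↦ 𝔼 Ψ(·,W^ε(s)) converges in distribution to 𝔼 Ψ(·,W), as ε→0. -/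
open MeasureTheory Filter Topology
open Metric
open scoped ENNReal NNReal

noncomputable def trunc' (R t : ℝ) : ℝ := max (-R) (min t R)

lemma trunc'_abs_le {R : ℝ} (hR : 0 ≤ R) (t : ℝ) : |trunc' R t| ≤ R := by
  rw [abs_le]
  exact ⟨le_max_left _ _, max_le (by linarith) (min_le_right _ _)⟩

lemma trunc'_lip (R a b : ℝ) : |trunc' R a - trunc' R b| ≤ |a - b| := by
  unfold trunc'
  rw [max_comm (-R) (min a R), max_comm (-R) (min b R)]
  calc |max (min a R) (-R) - max (min b R) (-R)| ≤ |min a R - min b R| :=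
        abs_max_sub_max_le_abs _ _ _
    _ ≤ max |a - b| |R - R| := abs_min_sub_min_le_max _ _ _ _
    _ ≤ |a - b| := by simp

lemma trunc'_eq {R t : ℝ} (h : |t| ≤ R) : trunc' R t = t := by
  rw [abs_le] at h
  simp [trunc', min_eq_left h.2, max_eq_right h.1]

lemma trunc'_err {R δ t : ℝ} (hR : 0 < R) (hδ : 0 < δ) :
    |t - trunc' R t| ≤ |t| ^ (1 + δ) / R ^ δ := by
  by_cases h : |t| ≤ R
  · rw [trunc'_eq h]
    simp only [sub_self, abs_zero]
    positivity
  · push_neg at h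
    have ht : 0 < |t| := lt_trans hR h
    have h1 : |t - trunc' R t| ≤ |t| := by
      rcases le_or_gt t 0 with hle | hlt
      · have : trunc' R t = -R := by
          have : min t R = t := min_eq_left (by rw [abs_of_nonpos hle] at h; linarith)
          rw [trunc', this, max_eq_left (by rw [abs_of_nonpos hle] at h; linarith)]
        rw [this, abs_of_nonpos hle] at *
        rw [abs_of_nonpos (by linarith)]
        linarith
      · have : trunc' R t = R := by
          have : min t R = R := min_eq_right (by rw [abs_of_pos hlt] at h; linarith)
          rw [trunc', this, max_eq_right (by linarith)]
        rw [this, abs_of_pos hlt] at *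
        rw [abs_of_nonneg (by linarith)]
        linarith
    refine h1.trans ?_
    rw [le_div_iff₀ (Real.rpow_pos_of_pos hR δ)]
    have h2 : |t| ^ (1 + δ) = |t| * |t| ^ δ := by
      rw [Real.rpow_add ht, Real.rpow_one]
    rw [h2]
    exact mul_le_mul_of_nonneg_left (Real.rpow_le_rpow hR.le h.le hδ.le) ht.le

lemma abs_le_one_add_rpow {δ : ℝ} (hδ : 0 < δ) (t : ℝ) : |t| ≤ 1 + |t| ^ (1 + δ) := by
  by_cases h : |t| ≤ 1
  · have : (0:ℝ) ≤ |t| ^ (1 + δ) := Real.rpow_nonneg (abs_nonneg t) _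
    linarith
  · push_neg at h
    calc |t| = |t| ^ (1:ℝ) := (Real.rpow_one _).symm
      _ ≤ |t| ^ (1 + δ) := Real.rpow_le_rpow_of_exponent_le h.le (by linarith)
      _ ≤ 1 + |t| ^ (1 + δ) := by linarith

lemma lp_coupling {S : Type*} [MeasurableSpace S] (P : Measure S) [IsProbabilityMeasure P]
    {Y Y' : S → ℝ} (hY : AEMeasurable Y P) (hY' : AEMeasurable Y' P)
    {α : ℝ} (hα : 0 < α)
    (h : P {s | α < |Y s - Y' s|} ≤ ENNReal.ofReal α) :
    levyProkhorovEDist (P.map Y) (P.map Y') ≤ ENNReal.ofReal α := by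
  have key : ∀ (Z Z' : S → ℝ), AEMeasurable Z P → AEMeasurable Z' P →
      P {s | α < |Z s - Z' s|} ≤ ENNReal.ofReal α →
      ∀ (ε : ℝ≥0∞) (B : Set ℝ), ENNReal.ofReal α < ε → ε < ∞ → MeasurableSet B →
      (P.map Z) B ≤ (P.map Z') (thickening ε.toReal B) + ε := by
    intro Z Z' hZ hZ' hbad ε B hεα hεtop hB
    have hα' : α < ε.toReal := by
      have := (ENNReal.toReal_lt_toReal ENNReal.ofReal_ne_top hεtop.ne).mpr hεα
      rwa [ENNReal.toReal_ofReal hα.le] at this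
    rw [Measure.map_apply_of_aemeasurable hZ hB,
      Measure.map_apply_of_aemeasurable hZ' isOpen_thickening.measurableSet]
    have hsub : Z ⁻¹' B ⊆ Z' ⁻¹' (thickening ε.toReal B) ∪ {s | α < |Z s - Z' s|} := by
      intro s hs
      by_cases hb : α < |Z s - Z' s|
      · exact Or.inr hb
      · push_neg at hb
        refine Or.inl ?_
        rw [Set.mem_preimage, mem_thickening_iff]
        exact ⟨Z s, hs, by rw [Real.dist_eq, abs_sub_comm]; linarith⟩
    calc P (Z ⁻¹' B) ≤ P (Z' ⁻¹' (thickening ε.toReal B)) + P {s | α < |Z s - Z' s|} :=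
          (measure_mono hsub).trans (measure_union_le _ _)
      _ ≤ P (Z' ⁻¹' (thickening ε.toReal B)) + ε := add_le_add_right (hbad.trans hεα.le) _
  apply levyProkhorovEDist_le_of_forall
  intro ε B hεα hεtop hB
  have h' : P {s | α < |Y' s - Y s|} ≤ ENNReal.ofReal α := by
    simpa [abs_sub_comm] using h
  exact ⟨key Y Y' hY hY' h ε B hεα hεtop hB, key Y' Y hY' hY h' ε B hεα hεtop hB⟩

/-- Corollary: convergence in law of partial expectations.
Let `X` be a Banach space, `(Ω,𝓕,Q)` and `(S,𝒜,P)` probability spaces,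
`Ψ : Ω × X → ℝ` jointly measurable, and `{W^ε}` a family of `X`-valued random
variables on `S`.  Assume:
(i) `x ↦ Ψ(ω,x)` is continuous in `Q`-probability;
(ii) for each `x ∈ X`, `ω ↦ Ψ(ω,x)` is measurable;
(iii) for some `δ > 0`, the family `{s ↦ E_Q |Ψ(·, W^ε(s))|^{1+δ}}` is a.s. finite and tight.
If `W^ε → W` in distribution then `s ↦ E_Q Ψ(·, W^ε(s))` converges in distribution to
`E_Q Ψ(·, W)` as `ε → 0⁺`. -/
theorem stmt1 {X : Type*} [NormedAddCommGroup X] [NormedSpace ℝ X] [CompleteSpace X]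
    [MeasurableSpace X] [BorelSpace X]
    {Ω S : Type*} [MeasurableSpace Ω] [MeasurableSpace S]
    (Q : Measure Ω) [IsProbabilityMeasure Q] (P : Measure S) [IsProbabilityMeasure P]
    (Ψ : Ω → X → ℝ)
    (hΨjm : Measurable (Function.uncurry Ψ))
    -- (i) continuity in Q-probability
    (hcont : ∀ (x : ℕ → X) (x₀ : X), Tendsto x atTop (𝓝 x₀) →
      TendstoInMeasure Q (fun n ω => Ψ ω (x n)) atTop (fun ω => Ψ ω x₀))
    -- (ii) measurability in ω for each fixed x
    (hmeasω : ∀ x : X, Measurable fun ω => Ψ ω x)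
    (W : ℝ → S → X) (W₀ : S → X)
    (hWmeas : ∀ ε, 0 < ε → Measurable (W ε)) (hW₀meas : Measurable W₀)
    (δ : ℝ) (hδ : 0 < δ)
    -- (iii) a.s. finiteness and tightness of the (1+δ)-moments
    (hfin : ∀ ε, 0 < ε → ∀ᵐ s ∂P, Integrable (fun ω => |Ψ ω (W ε s)| ^ (1 + δ)) Q)
    (htight : ∀ η, 0 < η → ∃ M, 0 < M ∧ ∀ ε, 0 < ε →
      P {s | M < ∫ ω, |Ψ ω (W ε s)| ^ (1 + δ) ∂Q} ≤ ENNReal.ofReal η)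
    -- W^ε → W in distribution on X
    (hconv : ∀ f : BoundedContinuousFunction X ℝ,
      Tendsto (fun ε => ∫ s, f (W ε s) ∂P) (𝓝[>] (0:ℝ)) (𝓝 (∫ s, f (W₀ s) ∂P))) :
    ∀ f : BoundedContinuousFunction ℝ ℝ,
      Tendsto (fun ε => ∫ s, f (∫ ω, Ψ ω (W ε s) ∂Q) ∂P) (𝓝[>] (0:ℝ))
        (𝓝 (∫ s, f (∫ ω, Ψ ω (W₀ s) ∂Q) ∂P)) := by
  intro f
  classical
  set F : X → ℝ := fun x => ∫ ω, Ψ ω x ∂Q with hFdef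
  -- measurability of F
  have hFsm : StronglyMeasurable F := by
    have h1 : StronglyMeasurable (fun p : X × Ω => Ψ p.2 p.1) :=
      (hΨjm.comp measurable_swap).stronglyMeasurable
    exact h1.integral_prod_right'
  -- trunc continuity
  have htrunc_cont : ∀ R : ℝ, Continuous (trunc' R) :=
    fun R => continuous_const.max (continuous_id.min continuous_const)
  -- moment functional
  set G : X → ℝ≥0∞ := fun x => ∫⁻ ω, ENNReal.ofReal (|Ψ ω x| ^ (1 + δ)) ∂Q with hGdef
  have hrpc : Continuous (fun t : ℝ => t ^ (1 + δ)) :=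
    Real.continuous_rpow_const (by linarith)
  have hmom_meas : ∀ x : X, Measurable fun ω => |Ψ ω x| ^ (1 + δ) :=
    fun x => hrpc.measurable.comp (hmeasω x).abs
  have hGmeas : Measurable G := by
    apply Measurable.lintegral_prod_right (f := fun x ω => ENNReal.ofReal (|Ψ ω x| ^ (1 + δ)))
    exact (hrpc.measurable.comp (hΨjm.comp measurable_swap).abs).ennreal_ofReal
  have hG_eq : ∀ x : X, Integrable (fun ω => |Ψ ω x| ^ (1 + δ)) Q →
      G x = ENNReal.ofReal (∫ ω, |Ψ ω x| ^ (1 + δ) ∂Q) := by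
    intro x hint
    exact (ofReal_integral_eq_lintegral_ofReal hint (ae_of_all _ fun ω => by positivity)).symm
  have hG_fin_int : ∀ x : X, G x ≠ ∞ → Integrable (fun ω => |Ψ ω x| ^ (1 + δ)) Q := by
    intro x hx
    refine ⟨(hmom_meas x).aestronglyMeasurable, ?_⟩
    rw [hasFiniteIntegral_iff_ofReal (ae_of_all _ fun ω => by positivity)]
    exact Ne.lt_top hx
  have hint_psi : ∀ x : X, Integrable (fun ω => |Ψ ω x| ^ (1 + δ)) Q →
      Integrable (fun ω => Ψ ω x) Q := by
    intro x hint
    refine Integrable.mono' ((integrable_const 1).add hint) (hmeasω x).aestronglyMeasurable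
      (ae_of_all _ fun ω => ?_)
    rw [Real.norm_eq_abs]
    exact abs_le_one_add_rpow hδ _
  -- lower semicontinuity: superlevel sets of G are open
  have hGopen : ∀ M : ℝ≥0∞, IsOpen {x | M < G x} := by
    intro M
    rw [← isClosed_compl_iff]
    have hset : {x : X | M < G x}ᶜ = {x | G x ≤ M} := by ext x; simp
    rw [hset]
    apply IsSeqClosed.isClosed
    intro x x₀ hmem hlim
    by_contra hgt
    simp only [Set.mem_setOf_eq, not_le] at hgt
    obtain ⟨ns, _hns, hae⟩ := (hcont x x₀ hlim).exists_seq_tendsto_ae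
    have fatou : G x₀ ≤ atTop.liminf fun i => G (x (ns i)) := by
      have heq : ∀ᵐ ω ∂Q, ENNReal.ofReal (|Ψ ω x₀| ^ (1 + δ)) =
          atTop.liminf fun i => ENNReal.ofReal (|Ψ ω (x (ns i))| ^ (1 + δ)) := by
        filter_upwards [hae] with ω hω
        have hc2 : Tendsto (fun i => ENNReal.ofReal (|Ψ ω (x (ns i))| ^ (1 + δ))) atTop
            (𝓝 (ENNReal.ofReal (|Ψ ω x₀| ^ (1 + δ)))) := by
          have hcr : Continuous fun t : ℝ => ENNReal.ofReal (|t| ^ (1 + δ)) :=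
            ENNReal.continuous_ofReal.comp (hrpc.comp continuous_abs)
          exact (hcr.tendsto _).comp hω
        exact hc2.liminf_eq.symm
      calc G x₀ = ∫⁻ ω, atTop.liminf (fun i => ENNReal.ofReal (|Ψ ω (x (ns i))| ^ (1 + δ))) ∂Q :=
            lintegral_congr_ae heq
        _ ≤ atTop.liminf fun i => G (x (ns i)) :=
            lintegral_liminf_le fun i => ((hmom_meas _)).ennreal_ofReal
    have hbdd : (atTop.liminf fun i => G (x (ns i))) ≤ M :=
      (liminf_le_liminf (Eventually.of_forall fun i => hmem (ns i))).trans
        (le_of_eq (liminf_const M))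
    exact absurd (fatou.trans hbdd) (not_le.mpr hgt)
  -- truncated functionals
  set FR : ℝ → X → ℝ := fun R x => ∫ ω, trunc' R (Ψ ω x) ∂Q with hFRdef
  have hFRint : ∀ R : ℝ, 0 ≤ R → ∀ x : X, Integrable (fun ω => trunc' R (Ψ ω x)) Q := by
    intro R hR x
    refine Integrable.mono' (integrable_const R)
      (((htrunc_cont R).measurable.comp (hmeasω x)).aestronglyMeasurable)
      (ae_of_all _ fun ω => ?_)
    rw [Real.norm_eq_abs]
    exact trunc'_abs_le hR _
  have hFRcont : ∀ R : ℝ, 0 ≤ R → Continuous (FR R) := by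
    intro R hR
    apply SeqContinuous.continuous
    intro x x₀ hlim
    have htim : TendstoInMeasure Q (fun n ω => trunc' R (Ψ ω (x n))) atTop
        (fun ω => trunc' R (Ψ ω x₀)) := by
      intro η hη
      have h1 := hcont x x₀ hlim η hη
      refine tendsto_of_tendsto_of_tendsto_of_le_of_le tendsto_const_nhds h1
        (fun n => zero_le) (fun n => measure_mono ?_)
      intro ω hω
      simp only [Set.mem_setOf_eq, Real.dist_eq] at hω ⊢
      exact hω.trans (by rw [edist_dist, edist_dist]; exact ENNReal.ofReal_le_ofReal (by simpa [Real.dist_eq] using trunc'_lip R _ _))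
    apply tendsto_of_subseq_tendsto
    intro ns hns
    have htim2 : TendstoInMeasure Q (fun i ω => trunc' R (Ψ ω (x (ns i)))) atTop
        (fun ω => trunc' R (Ψ ω x₀)) := fun η hη => (htim η hη).comp hns
    obtain ⟨ms, _hms, hae⟩ := htim2.exists_seq_tendsto_ae
    refine ⟨ms, ?_⟩
    exact tendsto_integral_of_dominated_convergence (fun _ => R)
      (fun i => (((htrunc_cont R).measurable.comp (hmeasω _)).aestronglyMeasurable))
      (integrable_const R)
      (fun i => ae_of_all _ fun ω => by
        rw [Real.norm_eq_abs]; exact trunc'_abs_le hR _)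
      hae
  have herr : ∀ R : ℝ, 0 < R → ∀ x : X, Integrable (fun ω => |Ψ ω x| ^ (1 + δ)) Q →
      |F x - FR R x| ≤ (∫ ω, |Ψ ω x| ^ (1 + δ) ∂Q) / R ^ δ := by
    intro R hR x hint
    have hψint := hint_psi x hint
    have htrint := hFRint R hR.le x
    have hsub : F x - FR R x = ∫ ω, (Ψ ω x - trunc' R (Ψ ω x)) ∂Q :=
      (integral_sub hψint htrint).symm
    rw [hsub]
    calc |∫ ω, (Ψ ω x - trunc' R (Ψ ω x)) ∂Q| ≤ ∫ ω, |Ψ ω x - trunc' R (Ψ ω x)| ∂Q :=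
          by simpa [Real.norm_eq_abs] using
            norm_integral_le_integral_norm (μ := Q) (fun ω => Ψ ω x - trunc' R (Ψ ω x))
      _ ≤ ∫ ω, |Ψ ω x| ^ (1 + δ) / R ^ δ ∂Q :=
          integral_mono (hψint.sub htrint).abs (hint.div_const _)
            (fun ω => trunc'_err hR hδ)
      _ = (∫ ω, |Ψ ω x| ^ (1 + δ) ∂Q) / R ^ δ := integral_div _ _
  -- laws on X
  have hmapW : ∀ ε : ℝ, 0 < ε → IsProbabilityMeasure (P.map (W ε)) :=
    fun ε h => Measure.isProbabilityMeasure_map (hWmeas ε h).aemeasurable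
  have hmapW₀ : IsProbabilityMeasure (P.map W₀) :=
    Measure.isProbabilityMeasure_map hW₀meas.aemeasurable
  set ν₀ : ProbabilityMeasure X := ⟨P.map W₀, hmapW₀⟩ with hν₀def
  set νX : ℝ → ProbabilityMeasure X :=
    fun ε => if h : 0 < ε then ⟨P.map (W ε), hmapW ε h⟩ else ν₀ with hνXdef
  have hνXval : ∀ ε : ℝ, 0 < ε → (νX ε : Measure X) = P.map (W ε) := by
    intro ε h
    simp only [hνXdef, dif_pos h]
    exact congrArg Subtype.val (dif_pos h)
  have hνX : Tendsto νX (𝓝[>] (0:ℝ)) (𝓝 ν₀) := by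
    rw [ProbabilityMeasure.tendsto_iff_forall_integral_tendsto]
    intro g
    have hlim : ∫ x, g x ∂(ν₀ : Measure X) = ∫ s, g (W₀ s) ∂P := by
      simp only [hν₀def]
      exact integral_map hW₀meas.aemeasurable g.continuous.aestronglyMeasurable
    rw [hlim]
    refine Tendsto.congr' ?_ (hconv g)
    filter_upwards [self_mem_nhdsWithin] with ε hε
    rw [hνXval ε hε, integral_map (hWmeas ε hε).aemeasurable g.continuous.aestronglyMeasurable]
  -- tail bound for the limit law
  have hW₀tail : ∀ M' η : ℝ, 0 < η →
      (∀ ε, 0 < ε → P {s | M' < ∫ ω, |Ψ ω (W ε s)| ^ (1 + δ) ∂Q} ≤ ENNReal.ofReal η) →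
      P {s | ENNReal.ofReal M' < G (W₀ s)} ≤ ENNReal.ofReal η := by
    intro M' η hη htail
    have hUopen := hGopen (ENNReal.ofReal M')
    have hport := ProbabilityMeasure.le_liminf_measure_open_of_tendsto hνX hUopen
    have hbound : ∀ᶠ ε in 𝓝[>] (0:ℝ),
        ((νX ε : Measure X)) {x | ENNReal.ofReal M' < G x} ≤ ENNReal.ofReal η := by
      filter_upwards [self_mem_nhdsWithin] with ε hε
      rw [hνXval ε hε, Measure.map_apply (hWmeas ε hε) hUopen.measurableSet]
      have hsub : (W ε ⁻¹' {x | ENNReal.ofReal M' < G x}) ≤ᵐ[P]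
          {s | M' < ∫ ω, |Ψ ω (W ε s)| ^ (1 + δ) ∂Q} := by
        filter_upwards [hfin ε hε] with s hs hsU
        have hge := hG_eq (W ε s) hs
        have hsU' : ENNReal.ofReal M' < G (W ε s) := hsU
        rw [hge] at hsU'
        show M' < ∫ ω, |Ψ ω (W ε s)| ^ (1 + δ) ∂Q
        by_contra hc
        push_neg at hc
        exact absurd hsU' (not_lt.mpr (ENNReal.ofReal_le_ofReal hc))
      exact (measure_mono_ae hsub).trans (htail ε hε)
    have heq0 : ((ν₀ : Measure X)) {x | ENNReal.ofReal M' < G x} =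
        P {s | ENNReal.ofReal M' < G (W₀ s)} := by
      show (P.map W₀) _ = _
      rw [Measure.map_apply hW₀meas hUopen.measurableSet]
      rfl
    rw [← heq0]
    refine hport.trans ?_
    exact (liminf_le_liminf hbound).trans (le_of_eq (liminf_const _))
  -- a.s. finiteness of moments at the limit
  have h₀fin : ∀ᵐ s ∂P, Integrable (fun ω => |Ψ ω (W₀ s)| ^ (1 + δ)) Q := by
    have hzero : P {s | G (W₀ s) = ∞} = 0 := by
      have hU : ∀ ζ : ℝ, 0 < ζ → P {s | G (W₀ s) = ∞} ≤ ENNReal.ofReal ζ := by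
        intro ζ hζ
        obtain ⟨M', _hM', htail⟩ := htight ζ hζ
        refine le_trans (measure_mono ?_) (hW₀tail M' ζ hζ htail)
        intro s hs
        simp only [Set.mem_setOf_eq] at hs ⊢
        rw [hs]
        exact ENNReal.ofReal_lt_top
      have htend : Tendsto (fun n : ℕ => ENNReal.ofReal (1 / (n + 1))) atTop (𝓝 0) := by
        rw [show (0:ℝ≥0∞) = ENNReal.ofReal 0 by simp]
        exact ENNReal.tendsto_ofReal tendsto_one_div_add_atTop_nhds_zero_nat
      have hle := ge_of_tendsto htend
        (Eventually.of_forall (fun n : ℕ => hU (1 / (n + 1)) (by positivity)))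
      exact le_antisymm hle zero_le
    have hae : ∀ᵐ s ∂P, G (W₀ s) ≠ ∞ := by
      rw [ae_iff]
      simpa using hzero
    filter_upwards [hae] with s hs
    exact hG_fin_int _ hs
  -- measurability of partial expectations
  have hYmeas : ∀ ε : ℝ, 0 < ε → Measurable fun s => F (W ε s) :=
    fun ε h => hFsm.measurable.comp (hWmeas ε h)
  have hY₀meas : Measurable fun s => F (W₀ s) := hFsm.measurable.comp hW₀meas
  have hμP : ∀ ε : ℝ, 0 < ε → IsProbabilityMeasure (P.map fun s => F (W ε s)) :=
    fun ε h => Measure.isProbabilityMeasure_map (hYmeas ε h).aemeasurable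
  have hμ₀P : IsProbabilityMeasure (P.map fun s => F (W₀ s)) :=
    Measure.isProbabilityMeasure_map hY₀meas.aemeasurable
  set μ₀ : ProbabilityMeasure ℝ := ⟨P.map fun s => F (W₀ s), hμ₀P⟩ with hμ₀def
  set μ : ℝ → ProbabilityMeasure ℝ :=
    fun ε => if h : 0 < ε then ⟨P.map fun s => F (W ε s), hμP ε h⟩ else μ₀ with hμdef
  have hμval : ∀ ε : ℝ, 0 < ε → (μ ε : Measure ℝ) = P.map fun s => F (W ε s) := by
    intro ε h
    simp only [hμdef, dif_pos h]
    exact congrArg Subtype.val (dif_pos h)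
  have hμ₀val : (μ₀ : Measure ℝ) = P.map fun s => F (W₀ s) := rfl
  have hmain : Tendsto μ (𝓝[>] (0:ℝ)) (𝓝 μ₀) := by
    set H := LevyProkhorov.probabilityMeasureHomeomorph (Ω := ℝ) with hHdef
    suffices hLP : Tendsto (fun ε => H (μ ε)) (𝓝[>] (0:ℝ)) (𝓝 (H μ₀)) by
      have h2 := (H.symm.continuous.tendsto (H μ₀)).comp hLP
      simpa [Function.comp_def] using h2
    rw [Metric.tendsto_nhds]
    intro θ hθ
    set α := θ / 4 with hαdef
    have hα : 0 < α := by positivity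
    obtain ⟨M, hM, hMtight⟩ := htight α hα
    have hW₀M : P {s | ENNReal.ofReal M < G (W₀ s)} ≤ ENNReal.ofReal α :=
      hW₀tail M α hα hMtight
    -- choice of R
    set R : ℝ := (M / α + 1) ^ (1 / δ) with hRdef
    have hRpos : 0 < R := Real.rpow_pos_of_pos (by positivity) _
    have hRδ : R ^ δ = M / α + 1 := by
      rw [hRdef, ← Real.rpow_mul (by positivity), one_div_mul_cancel hδ.ne', Real.rpow_one]
    have hRM : M / R ^ δ < α := by
      rw [hRδ, div_lt_iff₀ (by positivity)]
      have : α * (M / α + 1) = M + α := by field_simp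
      rw [this]
      linarith
    -- truncated laws converge
    have hFRRcont := hFRcont R hRpos.le
    have hμRconv := ProbabilityMeasure.tendsto_map_of_tendsto_of_continuous νX ν₀ hνX hFRRcont
    have hμRLP := (Metric.tendsto_nhds.mp ((H.continuous.tendsto _).comp hμRconv)) α hα
    -- coupling bounds
    have hbadε : ∀ ε : ℝ, 0 < ε →
        P {s | α < |F (W ε s) - FR R (W ε s)|} ≤ ENNReal.ofReal α := by
      intro ε hε
      have hsub : {s | α < |F (W ε s) - FR R (W ε s)|} ≤ᵐ[P]
          {s | M < ∫ ω, |Ψ ω (W ε s)| ^ (1 + δ) ∂Q} := by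
        filter_upwards [hfin ε hε] with s hs hbad
        have hbad' : α < |F (W ε s) - FR R (W ε s)| := hbad
        show M < ∫ ω, |Ψ ω (W ε s)| ^ (1 + δ) ∂Q
        by_contra hc
        push_neg at hc
        have h1 := herr R hRpos (W ε s) hs
        have h2 : (∫ ω, |Ψ ω (W ε s)| ^ (1 + δ) ∂Q) / R ^ δ ≤ M / R ^ δ :=
          (div_le_div_iff_of_pos_right (show (0:ℝ) < R ^ δ by positivity)).mpr hc
        linarith [h1.trans (h2.trans hRM.le)]
      exact (measure_mono_ae hsub).trans (hMtight ε hε)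
    have hbad₀ : P {s | α < |F (W₀ s) - FR R (W₀ s)|} ≤ ENNReal.ofReal α := by
      have hsub : {s | α < |F (W₀ s) - FR R (W₀ s)|} ≤ᵐ[P]
          {s | ENNReal.ofReal M < G (W₀ s)} := by
        filter_upwards [h₀fin] with s hs hbad
        have hbad' : α < |F (W₀ s) - FR R (W₀ s)| := hbad
        show ENNReal.ofReal M < G (W₀ s)
        by_contra hc
        push_neg at hc
        rw [hG_eq (W₀ s) hs] at hc
        have hIle : (∫ ω, |Ψ ω (W₀ s)| ^ (1 + δ) ∂Q) ≤ M :=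
          (ENNReal.ofReal_le_ofReal_iff hM.le).mp hc
        have h1 := herr R hRpos (W₀ s) hs
        have h2 : (∫ ω, |Ψ ω (W₀ s)| ^ (1 + δ) ∂Q) / R ^ δ ≤ M / R ^ δ :=
          (div_le_div_iff_of_pos_right (show (0:ℝ) < R ^ δ by positivity)).mpr hIle
        linarith [h1.trans (h2.trans hRM.le)]
      exact (measure_mono_ae hsub).trans hW₀M
    -- instances for finiteness
    haveI hPM₀R : IsProbabilityMeasure (P.map fun s => FR R (W₀ s)) :=
      Measure.isProbabilityMeasure_map (hFRRcont.measurable.comp hW₀meas).aemeasurable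
    have hQ3 : levyProkhorovEDist (P.map fun s => FR R (W₀ s)) ((μ₀ : Measure ℝ))
        ≤ ENNReal.ofReal α := by
      rw [hμ₀val]
      refine lp_coupling P
        (show Measurable fun s => FR R (W₀ s) from hFRRcont.measurable.comp hW₀meas).aemeasurable
        hY₀meas.aemeasurable hα ?_
      have : {s | α < |FR R (W₀ s) - F (W₀ s)|} = {s | α < |F (W₀ s) - FR R (W₀ s)|} := by
        ext s; rw [Set.mem_setOf_eq, Set.mem_setOf_eq, abs_sub_comm]
      rw [this]
      exact hbad₀
    have hmapmap₀ : ((ν₀.map hFRRcont.measurable.aemeasurable : Measure ℝ))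
        = P.map fun s => FR R (W₀ s) := by
      rw [ProbabilityMeasure.toMeasure_map]
      show (P.map W₀).map _ = _
      rw [Measure.map_map hFRRcont.measurable hW₀meas]
      rfl
    -- put together
    filter_upwards [self_mem_nhdsWithin, hμRLP] with ε hε' hεR
    have hε : (0:ℝ) < ε := hε'
    haveI hPMεR : IsProbabilityMeasure (P.map fun s => FR R (W ε s)) :=
      Measure.isProbabilityMeasure_map (hFRRcont.measurable.comp (hWmeas ε hε)).aemeasurable
    haveI hPMε : IsProbabilityMeasure ((μ ε : Measure ℝ)) := (μ ε).prop
    have hQ1 : levyProkhorovEDist ((μ ε : Measure ℝ)) (P.map fun s => FR R (W ε s))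
        ≤ ENNReal.ofReal α := by
      rw [hμval ε hε]
      exact lp_coupling P (hYmeas ε hε).aemeasurable
        (show Measurable fun s => FR R (W ε s) from
          hFRRcont.measurable.comp (hWmeas ε hε)).aemeasurable hα (hbadε ε hε)
    have hmapmap : (((νX ε).map hFRRcont.measurable.aemeasurable : Measure ℝ))
        = P.map fun s => FR R (W ε s) := by
      rw [ProbabilityMeasure.toMeasure_map, hνXval ε hε,
        Measure.map_map hFRRcont.measurable (hWmeas ε hε)]
      rfl
    have hQ2 : levyProkhorovEDist (P.map fun s => FR R (W ε s)) (P.map fun s => FR R (W₀ s))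
        < ENNReal.ofReal α := by
      rw [← hmapmap, ← hmapmap₀]
      have hdd : dist (H ((νX ε).map hFRRcont.measurable.aemeasurable))
          (H (ν₀.map hFRRcont.measurable.aemeasurable)) < α := hεR
      rw [LevyProkhorov.dist_probabilityMeasure_def] at hdd
      rw [ENNReal.lt_ofReal_iff_toReal_lt (levyProkhorovEDist_ne_top _ _)]
      exact hdd
    have htri : levyProkhorovEDist ((μ ε : Measure ℝ)) ((μ₀ : Measure ℝ)) ≤
        ENNReal.ofReal (α + α + α) := by
      rw [ENNReal.ofReal_add (by positivity) hα.le, ENNReal.ofReal_add hα.le hα.le]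
      calc levyProkhorovEDist ((μ ε : Measure ℝ)) ((μ₀ : Measure ℝ))
          ≤ levyProkhorovEDist ((μ ε : Measure ℝ)) (P.map fun s => FR R (W ε s)) +
            levyProkhorovEDist (P.map fun s => FR R (W ε s)) ((μ₀ : Measure ℝ)) :=
            levyProkhorovEDist_triangle _ _ _
        _ ≤ levyProkhorovEDist ((μ ε : Measure ℝ)) (P.map fun s => FR R (W ε s)) +
            (levyProkhorovEDist (P.map fun s => FR R (W ε s)) (P.map fun s => FR R (W₀ s)) +
             levyProkhorovEDist (P.map fun s => FR R (W₀ s)) ((μ₀ : Measure ℝ))) :=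
            add_le_add_right (levyProkhorovEDist_triangle _ _ _) _
        _ ≤ ENNReal.ofReal α + (ENNReal.ofReal α + ENNReal.ofReal α) :=
            add_le_add hQ1 (add_le_add hQ2.le hQ3)
        _ = ENNReal.ofReal α + ENNReal.ofReal α + ENNReal.ofReal α := by ring
    show dist (H (μ ε)) (H μ₀) < θ
    rw [LevyProkhorov.dist_probabilityMeasure_def]
    have h3 := ENNReal.toReal_mono ENNReal.ofReal_ne_top htri
    rw [ENNReal.toReal_ofReal (by positivity)] at h3
    calc levyProkhorovDist ((μ ε : Measure ℝ)) ((μ₀ : Measure ℝ)) ≤ α + α + α := h3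
      _ < θ := by rw [hαdef]; linarith
  -- conclude
  have hext := ProbabilityMeasure.tendsto_iff_forall_integral_tendsto.mp hmain f
  have hlimeq : ∫ y, f y ∂(μ₀ : Measure ℝ) = ∫ s, f (F (W₀ s)) ∂P := by
    rw [hμ₀val]
    exact integral_map hY₀meas.aemeasurable f.continuous.aestronglyMeasurable
  rw [hlimeq] at hext
  refine Tendsto.congr' ?_ hext
  filter_upwards [self_mem_nhdsWithin] with ε hε
  rw [hμval ε hε, integral_map (hYmeas ε hε).aemeasurable f.continuous.aestronglyMeasurable]
end

section
/- If Z is a standard Gaussian N(0,1) random variable, c>0 and 0<p<2, then E[exp(c|Z|^p)] ≤ √2 · exp( ((2−p)/2) · (4c)^{2/(2−p)} ). -/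
open MeasureTheory ProbabilityTheory Real
open scoped ENNReal NNReal

lemma gauss_density_eq :
    (fun x : ℝ => (gaussianPDFReal 0 1 x).toNNReal • Real.exp (x ^ 2 / 4))
      = fun x : ℝ => (Real.sqrt (2 * π))⁻¹ * Real.exp (-(4⁻¹) * x ^ 2) := by
  funext x
  have h0 : 0 ≤ gaussianPDFReal 0 1 x := gaussianPDFReal_nonneg 0 1 x
  rw [NNReal.smul_def, smul_eq_mul, Real.coe_toNNReal _ h0]
  simp only [gaussianPDFReal, NNReal.coe_one, mul_one, sub_zero]
  rw [mul_assoc, ← Real.exp_add]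
  congr 1
  ring

lemma gauss_integrable : Integrable (fun x : ℝ => Real.exp (x ^ 2 / 4)) (gaussianReal 0 1) := by
  rw [gaussianReal_of_var_ne_zero 0 one_ne_zero]
  have hm : Measurable fun x : ℝ => (gaussianPDFReal 0 1 x).toNNReal :=
    (measurable_gaussianPDFReal 0 1).real_toNNReal
  have : gaussianPDF 0 1 = fun x => ((gaussianPDFReal 0 1 x).toNNReal : ℝ≥0∞) := by
    funext x; rfl
  rw [this, integrable_withDensity_iff_integrable_smul hm, gauss_density_eq]
  exact (integrable_exp_neg_mul_sq (by norm_num : (0:ℝ) < 4⁻¹)).const_mul _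

lemma gauss_integral : ∫ x, Real.exp (x ^ 2 / 4) ∂(gaussianReal 0 1) = Real.sqrt 2 := by
  rw [gaussianReal_of_var_ne_zero 0 one_ne_zero]
  have hm : Measurable fun x : ℝ => (gaussianPDFReal 0 1 x).toNNReal :=
    (measurable_gaussianPDFReal 0 1).real_toNNReal
  have h : gaussianPDF 0 1 = fun x => ((gaussianPDFReal 0 1 x).toNNReal : ℝ≥0∞) := by
    funext x; rfl
  rw [h, integral_withDensity_eq_integral_smul hm]
  rw [gauss_density_eq]
  rw [integral_const_mul, integral_gaussian]
  have hπ : (0:ℝ) < π := pi_pos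
  rw [show π / 4⁻¹ = 2 * (2 * π) by ring, Real.sqrt_mul (by norm_num)]
  field_simp
  rw [Real.sqrt_mul (by positivity), Real.sqrt_sq (by norm_num : (0:ℝ) ≤ 2),
    Real.sq_sqrt (by norm_num : (0:ℝ) ≤ 2)]

lemma key_ineq {c p : ℝ} (hc : 0 < c) (hp0 : 0 < p) (hp2 : p < 2) (x : ℝ) :
    c * |x| ^ p ≤ x ^ 2 / 4 + (2 - p) / 2 * (4 * c) ^ (2 / (2 - p)) := by
  have h2p : (0:ℝ) < 2 - p := by linarith
  have hconj : Real.HolderConjugate (2 / p) (2 / (2 - p)) := by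
    rw [Real.holderConjugate_iff]
    constructor
    · rw [lt_div_iff₀ hp0]; linarith
    · field_simp
      ring
  have ha : (0:ℝ) ≤ (|x| / 2) ^ p := Real.rpow_nonneg (by positivity) p
  have hb : (0:ℝ) ≤ c * 2 ^ p := by positivity
  have hyoung := Real.young_inequality_of_nonneg ha hb hconj
  have hab : (|x| / 2) ^ p * (c * 2 ^ p) = c * |x| ^ p := by
    rw [Real.div_rpow (abs_nonneg x) (by norm_num)]
    have h2 : (0:ℝ) < (2:ℝ) ^ p := Real.rpow_pos_of_pos (by norm_num) p
    field_simp
  have haP : ((|x| / 2) ^ p) ^ (2 / p) = x ^ 2 / 4 := by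
    rw [← Real.rpow_mul (by positivity), mul_div_cancel₀ _ (ne_of_gt hp0)]
    rw [show (2:ℝ) = ((2:ℕ):ℝ) by norm_num, Real.rpow_natCast]
    rw [div_pow, sq_abs]
    norm_num
  rw [hab, haP] at hyoung
  refine hyoung.trans ?_
  have h1 : x ^ 2 / 4 / (2 / p) ≤ x ^ 2 / 4 := by
    refine div_le_self (by positivity) ?_
    rw [le_div_iff₀ hp0]; linarith
  have hbase : c * 2 ^ p ≤ 4 * c := by
    have h4 : (2:ℝ) ^ p ≤ 4 := by
      calc (2:ℝ) ^ p ≤ 2 ^ (2:ℝ) :=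
        Real.rpow_le_rpow_of_exponent_le (by norm_num) (le_of_lt hp2)
      _ = 4 := by
        rw [show (2:ℝ) = ((2:ℕ):ℝ) by norm_num, Real.rpow_natCast]; norm_num
    nlinarith
  have hr : (c * 2 ^ p) ^ (2 / (2 - p)) ≤ (4 * c) ^ (2 / (2 - p)) :=
    Real.rpow_le_rpow hb hbase (by positivity)
  have h2 : (c * 2 ^ p) ^ (2 / (2 - p)) / (2 / (2 - p))
      ≤ (2 - p) / 2 * (4 * c) ^ (2 / (2 - p)) := by
    have heq : (c * 2 ^ p) ^ (2 / (2 - p)) / (2 / (2 - p))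
        = (2 - p) / 2 * (c * 2 ^ p) ^ (2 / (2 - p)) := by
      field_simp
    rw [heq]
    exact mul_le_mul_of_nonneg_left hr (by positivity)
  linarith

/-- If `Z` is a standard Gaussian `N(0,1)` random variable, `c > 0`
and `0 < p < 2`, then `E[exp(c |Z|^p)] ≤ √2 · exp(((2−p)/2) · (4c)^{2/(2−p)})`. -/
theorem stmt6 {Ω : Type*} [MeasurableSpace Ω] (μ : Measure Ω) [IsProbabilityMeasure μ]
    (Z : Ω → ℝ) (hZ : Measure.map Z μ = gaussianReal 0 1)
    (c p : ℝ) (hc : 0 < c) (hp0 : 0 < p) (hp2 : p < 2) :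
    ∫ ω, Real.exp (c * |Z ω| ^ p) ∂μ ≤
      Real.sqrt 2 * Real.exp ((2 - p) / 2 * (4 * c) ^ (2 / (2 - p))) := by
  set K := (2 - p) / 2 * (4 * c) ^ (2 / (2 - p)) with hK
  have hZm : AEMeasurable Z μ := aemeasurable_of_map_neZero (by rw [hZ]; infer_instance)
  have hmeas : Measurable fun x : ℝ => Real.exp (c * |x| ^ p) := by
    fun_prop
  have h1 : ∫ ω, Real.exp (c * |Z ω| ^ p) ∂μ
      = ∫ x, Real.exp (c * |x| ^ p) ∂(gaussianReal 0 1) := by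
    rw [← hZ, integral_map hZm hmeas.aestronglyMeasurable]
  rw [h1]
  have hint : Integrable (fun x : ℝ => Real.exp (x ^ 2 / 4 + K)) (gaussianReal 0 1) := by
    simp only [Real.exp_add]
    exact gauss_integrable.mul_const _
  calc ∫ x, Real.exp (c * |x| ^ p) ∂(gaussianReal 0 1)
      ≤ ∫ x, Real.exp (x ^ 2 / 4 + K) ∂(gaussianReal 0 1) := by
        refine integral_mono_of_nonneg (ae_of_all _ fun x => (Real.exp_pos _).le) hint
          (ae_of_all _ fun x => ?_)
        exact Real.exp_le_exp.2 (key_ineq hc hp0 hp2 x)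
    _ = Real.sqrt 2 * Real.exp K := by
        simp only [Real.exp_add]
        rw [integral_mul_const, gauss_integral]
end

section
/- Let K>0 and let {X_ε, ε>0} be a family of real random variables with |X_ε| ≤ K a.s. for all ε, E X_ε = 0 for all ε, and E exp(X_ε) → 1 as ε→0. Then X_ε → 0 in probability as ε→0. -/
open MeasureTheory Filter Topology

lemma phi_key (η : ℝ) (hη : 0 < η) (x : ℝ) (hx : η ≤ |x|) :
    min (Real.exp η - 1 - η) (Real.exp (-η) - 1 + η) ≤ Real.exp x - 1 - x := by
  rcases le_abs.mp hx with h | h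
  · refine le_trans (min_le_left _ _) ?_
    have h1 : Real.exp η * Real.exp (x - η) = Real.exp x := by
      rw [← Real.exp_add]; ring_nf
    have h2 : x - η + 1 ≤ Real.exp (x - η) := Real.add_one_le_exp _
    have h3 : (1 : ℝ) ≤ Real.exp η := Real.one_le_exp hη.le
    nlinarith [mul_le_mul_of_nonneg_left h2 (Real.exp_pos η).le]
  · refine le_trans (min_le_right _ _) ?_
    have hxle : x ≤ -η := by linarith
    have h1 : Real.exp (-η) * Real.exp (x + η) = Real.exp x := by
      rw [← Real.exp_add]; ring_nf
    have h2 : x + η + 1 ≤ Real.exp (x + η) := Real.add_one_le_exp _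
    have h3 : Real.exp (-η) ≤ 1 := Real.exp_le_one_iff.mpr (by linarith)
    nlinarith [mul_le_mul_of_nonneg_left h2 (Real.exp_pos (-η)).le, Real.exp_pos (-η)]

/-- Let `K > 0` and `{X_ε, ε > 0}` be real random variables with
`|X_ε| ≤ K` a.s., `E X_ε = 0`, and `E exp(X_ε) → 1` as `ε → 0⁺`.  Then `X_ε → 0`
in probability as `ε → 0⁺`. -/
theorem stmt17 {Ω : Type*} [MeasurableSpace Ω] (P : Measure Ω) [IsProbabilityMeasure P]
    (K : ℝ) (hK : 0 < K) (X : ℝ → Ω → ℝ)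
    (hmeas : ∀ ε, 0 < ε → Measurable (X ε))
    (hbdd : ∀ ε, 0 < ε → ∀ᵐ ω ∂P, |X ε ω| ≤ K)
    (hmean : ∀ ε, 0 < ε → ∫ ω, X ε ω ∂P = 0)
    (hexp : Tendsto (fun ε => ∫ ω, Real.exp (X ε ω) ∂P) (𝓝[>] (0:ℝ)) (𝓝 1)) :
    ∀ η, 0 < η →
      Tendsto (fun ε => P {ω | η ≤ |X ε ω|}) (𝓝[>] (0:ℝ)) (𝓝 0) := by
  intro η hη
  set δ : ℝ := min (Real.exp η - 1 - η) (Real.exp (-η) - 1 + η) with hδdef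
  have hδ : 0 < δ := by
    apply lt_min
    · nlinarith [Real.add_one_lt_exp (ne_of_gt hη)]
    · nlinarith [Real.add_one_lt_exp (show (-η : ℝ) ≠ 0 by intro h; simp at h; linarith)]
  have hg : Tendsto (fun ε => ENNReal.ofReal ((∫ ω, Real.exp (X ε ω) ∂P - 1) / δ))
      (𝓝[>] (0:ℝ)) (𝓝 0) := by
    have h1 : Tendsto (fun ε => (∫ ω, Real.exp (X ε ω) ∂P - 1) / δ) (𝓝[>] (0:ℝ)) (𝓝 0) := by
      have := (hexp.sub (tendsto_const_nhds (x := (1:ℝ)))).div_const δ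
      simpa using this
    simpa using ENNReal.tendsto_ofReal h1
  refine tendsto_of_tendsto_of_tendsto_of_le_of_le' tendsto_const_nhds hg
    (Eventually.of_forall fun ε => zero_le) ?_
  filter_upwards [self_mem_nhdsWithin] with ε (hε : 0 < ε)
  have hXm := hmeas ε hε
  have hXint : Integrable (X ε) P := by
    refine Integrable.mono' (integrable_const K) hXm.aestronglyMeasurable ?_
    filter_upwards [hbdd ε hε] with ω h using by simpa [Real.norm_eq_abs] using h
  have hexpint : Integrable (fun ω => Real.exp (X ε ω)) P := by
    refine Integrable.mono' (integrable_const (Real.exp K))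
      (Real.measurable_exp.comp hXm).aestronglyMeasurable ?_
    filter_upwards [hbdd ε hε] with ω h
    rw [Real.norm_eq_abs, abs_of_pos (Real.exp_pos _)]
    exact Real.exp_le_exp.mpr (le_trans (le_abs_self _) h)
  set f : Ω → ℝ := fun ω => Real.exp (X ε ω) - 1 - X ε ω with hfdef
  have hfint : Integrable f P := (hexpint.sub (integrable_const 1)).sub hXint
  have hfnn : 0 ≤ᵐ[P] f := Eventually.of_forall fun ω => by
    have := Real.add_one_le_exp (X ε ω); simp only [hfdef, Pi.zero_apply]; linarith
  have hintf : ∫ ω, f ω ∂P = ∫ ω, Real.exp (X ε ω) ∂P - 1 := by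
    have h1 : ∫ ω, f ω ∂P = (∫ ω, (Real.exp (X ε ω) - 1) ∂P) - ∫ ω, X ε ω ∂P :=
      integral_sub (hexpint.sub (integrable_const 1)) hXint
    rw [h1, integral_sub hexpint (integrable_const 1), hmean ε hε, integral_const]
    simp
  have markov := mul_meas_ge_le_integral_of_nonneg hfnn hfint δ
  have hsubset : {ω | η ≤ |X ε ω|} ⊆ {ω | δ ≤ f ω} := fun ω hω => phi_key η hη _ hω
  calc P {ω | η ≤ |X ε ω|} ≤ P {ω | δ ≤ f ω} := measure_mono hsubset
    _ = ENNReal.ofReal (P {ω | δ ≤ f ω}).toReal :=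
        (ENNReal.ofReal_toReal (measure_ne_top P _)).symm
    _ ≤ ENNReal.ofReal ((∫ ω, Real.exp (X ε ω) ∂P - 1) / δ) := by
        apply ENNReal.ofReal_le_ofReal
        rw [le_div_iff₀ hδ, ← hintf]
        exact (mul_comm _ _).trans_le markov
end

section
/- Let ρ, σ : ℝ→ℝ be continuously differentiable functions with compact support. Then for all y, y' ∈ ℝ: ∫_ℝ ∫_ℝ 1_{{z·z'>0}} (|z|∧|z'|) ρ'(y−z) σ'(y'−z') dz dz' = ∫_ℝ ρ(y−z) σ(y'−z) dz. -/
open MeasureTheory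

private lemma derivAux (f : ℝ → ℝ) (hf : ContDiff ℝ 1 f) (a t : ℝ) :
    HasDerivAt (fun s => -f (a - s)) (deriv f (a - t)) t := by
  have h1 : HasDerivAt (fun s : ℝ => a - s) (-1) t := by
    exact (hasDerivAt_id' t).const_sub a
  have h2 := (hf.differentiable one_ne_zero (a - t)).hasDerivAt
  have h3 := (h2.comp t h1).neg
  have h4 : HasDerivAt (fun s => -f (a - s)) (-(deriv f (a - t) * -1)) t := h3
  simpa using h4

private lemma csAux (f : ℝ → ℝ) (hf : HasCompactSupport f) (a : ℝ) :
    HasCompactSupport (fun s => f (a - s)) := by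
  have he : Topology.IsClosedEmbedding (fun s : ℝ => a - s) := by
    have : (fun s : ℝ => a - s) = ⇑((Homeomorph.neg ℝ).trans (Homeomorph.addLeft a)) := by
      funext s; simp [sub_eq_add_neg]
    rw [this]; exact Homeomorph.isClosedEmbedding _
  exact hf.comp_isClosedEmbedding he

private lemma innerAux (σ : ℝ → ℝ) (hσ : ContDiff ℝ 1 σ) (hσc : HasCompactSupport σ)
    (y' z C : ℝ) :
    ∫ z' : ℝ, (if 0 < z * z' then (min |z| |z'|) * C * deriv σ (y' - z') else 0)
      = C * ∫ t in (0:ℝ)..z, σ (y' - t) := by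
  set τ : ℝ → ℝ := fun t => -σ (y' - t) with hτ_def
  have hτd : ∀ t, HasDerivAt τ (deriv σ (y' - t)) t := fun t => derivAux σ hσ y' t
  have hτderiv : ∀ t, deriv τ t = deriv σ (y' - t) := fun t => (hτd t).deriv
  have hτcd : ContDiff ℝ 1 τ := (hσ.comp (contDiff_const.sub contDiff_id)).neg
  have hτcs : HasCompactSupport τ := (csAux σ hσc y').neg
  have hdσcont : Continuous fun z' => deriv σ (y' - z') :=
    (hσ.continuous_deriv le_rfl).comp (continuous_const.sub continuous_id)
  have hdσcs : HasCompactSupport fun z' => deriv σ (y' - z') := by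
    have : (fun z' => deriv σ (y' - z')) = deriv τ := funext fun t => (hτderiv t).symm
    rw [this]; exact hτcs.deriv
  have hint : Integrable (fun z' => min |z| |z'| * C * deriv σ (y' - z')) := by
    apply Continuous.integrable_of_hasCompactSupport
    · exact ((continuous_const.min continuous_abs).mul continuous_const).mul hdσcont
    · exact hdσcs.mul_left
  have hIoi : ∀ b : ℝ, ∫ x in Set.Ioi b, deriv σ (y' - x) = σ (y' - b) := by
    intro b
    have h := HasCompactSupport.integral_Ioi_deriv_eq hτcd hτcs b
    have h2 : ∫ x in Set.Ioi b, deriv σ (y' - x) = ∫ x in Set.Ioi b, deriv τ x := by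
      refine setIntegral_congr_fun measurableSet_Ioi fun x _ => (hτderiv x).symm
    rw [h2, h]; simp [hτ_def]
  have hIic : ∀ b : ℝ, ∫ x in Set.Iic b, deriv σ (y' - x) = -σ (y' - b) := by
    intro b
    have h := HasCompactSupport.integral_Iic_deriv_eq hτcd hτcs b
    have h2 : ∫ x in Set.Iic b, deriv σ (y' - x) = ∫ x in Set.Iic b, deriv τ x := by
      refine setIntegral_congr_fun measurableSet_Iic fun x _ => (hτderiv x).symm
    rw [h2, h]
  rcases lt_trichotomy z 0 with hz | rfl | hz
  · -- z < 0
    have heq : (fun z' => if 0 < z * z' then min |z| |z'| * C * deriv σ (y' - z') else 0)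
        = Set.indicator (Set.Iic 0) (fun z' => min |z| |z'| * C * deriv σ (y' - z')) := by
      funext z'
      rcases lt_trichotomy z' 0 with h | rfl | h
      · rw [if_pos (mul_pos_of_neg_of_neg hz h), Set.indicator_of_mem (Set.mem_Iic.mpr h.le)]
      · rw [if_neg (by simp), Set.indicator_of_mem (Set.mem_Iic.mpr le_rfl)]
        simp [min_eq_right (abs_nonneg z)]
      · rw [if_neg (not_lt.2 (by nlinarith [hz.le, h.le] : z * z' ≤ 0)),
          Set.indicator_of_notMem (fun hm => (not_le.2 h) (Set.mem_Iic.mp hm))]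
    rw [heq, integral_indicator measurableSet_Iic, ← Set.Iic_union_Ioc_eq_Iic hz.le,
      setIntegral_union (Set.Iic_disjoint_Ioc le_rfl) measurableSet_Ioc
        hint.integrableOn hint.integrableOn]
    have h2 : ∫ z' in Set.Iic z, min |z| |z'| * C * deriv σ (y' - z') = z * C * σ (y' - z) := by
      rw [setIntegral_congr_fun (g := fun z' => -z * C * deriv σ (y' - z'))
        measurableSet_Iic ?_]
      · rw [show (fun z' => -z * C * deriv σ (y' - z'))
            = fun z' => (-z * C) * deriv σ (y' - z') from rfl, integral_const_mul, hIic]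
        ring
      · intro x hx
        have hx' : x ≤ z := hx
        have : min |z| |x| = -z := by
          rw [abs_of_neg hz, abs_of_neg (lt_of_le_of_lt hx' hz)]
          exact min_eq_left (by linarith)
        simp only [this]
    have h1 : ∫ z' in Set.Ioc z 0, min |z| |z'| * C * deriv σ (y' - z')
        = -(z * C * σ (y' - z)) + C * ∫ t in (0:ℝ)..z, σ (y' - t) := by
      rw [← intervalIntegral.integral_of_le hz.le,
        intervalIntegral.integral_congr (g := fun z' => (-z' * C) * deriv σ (y' - z')) ?_]
      · have hu : ∀ x ∈ Set.uIcc z 0, HasDerivAt (fun x : ℝ => -x * C) (-C) x := by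
          intro x _
          simpa using ((hasDerivAt_id x).neg.mul_const C)
        have hv : ∀ x ∈ Set.uIcc z 0, HasDerivAt τ (deriv σ (y' - x)) x := fun x _ => hτd x
        have ibp := intervalIntegral.integral_mul_deriv_eq_deriv_mul hu hv
          (intervalIntegrable_const) (hdσcont.intervalIntegrable z 0)
        rw [ibp]
        have : ∫ x in z..(0:ℝ), -C * τ x = C * ∫ t in z..(0:ℝ), σ (y' - t) := by
          rw [intervalIntegral.integral_const_mul]
          simp only [hτ_def]
          rw [intervalIntegral.integral_neg]; ring
        rw [this, intervalIntegral.integral_symm 0 z]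
        simp only [hτ_def]
        ring
      · intro x hx
        rw [Set.uIcc_of_le hz.le] at hx
        have : min |z| |x| = -x := by
          rw [abs_of_neg hz, abs_of_nonpos hx.2]
          exact min_eq_right (by linarith [hx.1])
        simp only [this]
    rw [h1, h2]; ring
  · -- z = 0
    simp
  · -- z > 0
    have heq : (fun z' => if 0 < z * z' then min |z| |z'| * C * deriv σ (y' - z') else 0)
        = Set.indicator (Set.Ioi 0) (fun z' => min |z| |z'| * C * deriv σ (y' - z')) := by
      funext z'
      by_cases h : 0 < z'
      · rw [if_pos (mul_pos hz h), Set.indicator_of_mem (Set.mem_Ioi.mpr h)]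
      · rw [if_neg (not_lt.2 (by nlinarith [hz.le, not_lt.1 h] : z * z' ≤ 0)),
          Set.indicator_of_notMem (fun hm => h (Set.mem_Ioi.mp hm))]
    rw [heq, integral_indicator measurableSet_Ioi, ← Set.Ioc_union_Ioi_eq_Ioi hz.le,
      setIntegral_union (Set.Ioc_disjoint_Ioi le_rfl) measurableSet_Ioi
        hint.integrableOn hint.integrableOn]
    have h2 : ∫ z' in Set.Ioi z, min |z| |z'| * C * deriv σ (y' - z') = z * C * σ (y' - z) := by
      rw [setIntegral_congr_fun (g := fun z' => z * C * deriv σ (y' - z'))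
        measurableSet_Ioi ?_]
      · rw [show (fun z' => z * C * deriv σ (y' - z'))
            = fun z' => (z * C) * deriv σ (y' - z') from rfl, integral_const_mul, hIoi]
      · intro x hx
        have hx' : z < x := hx
        have : min |z| |x| = z := by
          rw [abs_of_pos hz, abs_of_pos (hz.trans hx')]
          exact min_eq_left hx'.le
        simp only [this]
    have h1 : ∫ z' in Set.Ioc 0 z, min |z| |z'| * C * deriv σ (y' - z')
        = -(z * C * σ (y' - z)) + C * ∫ t in (0:ℝ)..z, σ (y' - t) := by
      rw [← intervalIntegral.integral_of_le hz.le,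
        intervalIntegral.integral_congr (g := fun z' => (z' * C) * deriv σ (y' - z')) ?_]
      · have hu : ∀ x ∈ Set.uIcc (0:ℝ) z, HasDerivAt (fun x : ℝ => x * C) C x := by
          intro x _
          simpa using ((hasDerivAt_id x).mul_const C)
        have hv : ∀ x ∈ Set.uIcc (0:ℝ) z, HasDerivAt τ (deriv σ (y' - x)) x := fun x _ => hτd x
        have ibp := intervalIntegral.integral_mul_deriv_eq_deriv_mul hu hv
          (intervalIntegrable_const) (hdσcont.intervalIntegrable 0 z)
        rw [ibp]
        have : ∫ x in (0:ℝ)..z, C * τ x = -(C * ∫ t in (0:ℝ)..z, σ (y' - t)) := by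
          rw [intervalIntegral.integral_const_mul]
          simp only [hτ_def]
          rw [intervalIntegral.integral_neg]; ring
        rw [this]
        simp only [hτ_def]
        ring
      · intro x hx
        rw [Set.uIcc_of_le hz.le] at hx
        have : min |z| |x| = x := by
          rw [abs_of_pos hz, abs_of_nonneg hx.1]
          exact min_eq_right hx.2
        simp only [this]
    rw [h1, h2]; ring

/-- For `ρ, σ : ℝ → ℝ` continuously differentiable with compact
support and any `y, y' ∈ ℝ`,
`∫∫ 1_{z z' > 0} (|z| ∧ |z'|) ρ'(y−z) σ'(y'−z') dz dz' = ∫ ρ(y−z) σ(y'−z) dz`. -/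
theorem stmt18 (ρ σ : ℝ → ℝ) (hρ : ContDiff ℝ 1 ρ) (hσ : ContDiff ℝ 1 σ)
    (hρc : HasCompactSupport ρ) (hσc : HasCompactSupport σ) (y y' : ℝ) :
    ∫ z : ℝ, ∫ z' : ℝ,
        (if 0 < z * z' then (min |z| |z'|) * deriv ρ (y - z) * deriv σ (y' - z') else 0)
      = ∫ z : ℝ, ρ (y - z) * σ (y' - z) := by
  have hinner : (fun z : ℝ => ∫ z' : ℝ,
      (if 0 < z * z' then (min |z| |z'|) * deriv ρ (y - z) * deriv σ (y' - z') else 0))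
      = fun z : ℝ => deriv ρ (y - z) * ∫ t in (0:ℝ)..z, σ (y' - t) :=
    funext fun z => innerAux σ hσ hσc y' z (deriv ρ (y - z))
  rw [hinner]
  -- outer integration by parts
  set π : ℝ → ℝ := fun t => -ρ (y - t) with hπ_def
  have hπd : ∀ t, HasDerivAt π (deriv ρ (y - t)) t := fun t => derivAux ρ hρ y t
  have hπcs : HasCompactSupport π := (csAux ρ hρc y).neg
  obtain ⟨r, hr⟩ := hπcs.isBounded.subset_closedBall 0
  set B : ℝ := |r| + 1 with hB_def
  have habs : ∀ x ∈ tsupport π, |x| ≤ r := by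
    intro x hx
    have := hr hx
    rwa [Metric.mem_closedBall, Real.dist_eq, sub_zero] at this
  have hmemB : ∀ x : ℝ, x ∉ Set.Ioc (-B) B → x ∉ tsupport π := by
    intro x hxB hx
    have h1 := habs x hx
    have h2 : r ≤ |r| := le_abs_self r
    rw [abs_le] at h1
    apply hxB
    constructor <;> [linarith; linarith]
  have hρzero : ∀ x : ℝ, x ∉ Set.Ioc (-B) B → ρ (y - x) = 0 := by
    intro x hx
    have := image_eq_zero_of_notMem_tsupport (hmemB x hx)
    simpa [hπ_def, neg_eq_zero] using this
  have hdρzero : ∀ x : ℝ, x ∉ Set.Ioc (-B) B → deriv ρ (y - x) = 0 := by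
    intro x hx
    have hx' : x ∉ tsupport π := hmemB x hx
    have : x ∉ Function.support (deriv π) := fun h => hx' (support_deriv_subset h)
    have h0 : deriv π x = 0 := Function.notMem_support.1 this
    rw [← (hπd x).deriv]; exact h0
  set g : ℝ → ℝ := fun z => ∫ t in (0:ℝ)..z, σ (y' - t) with hg_def
  have hσcont' : Continuous fun t => σ (y' - t) :=
    hσ.continuous.comp (continuous_const.sub continuous_id)
  have hgd : ∀ x : ℝ, HasDerivAt g (σ (y' - x)) x := fun x =>
    intervalIntegral.integral_hasDerivAt_right (hσcont'.intervalIntegrable 0 x)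
      (hσcont'.stronglyMeasurableAtFilter volume (nhds x)) hσcont'.continuousAt
  have hsup1 : Function.support (fun z => deriv ρ (y - z) * g z) ⊆ Set.Ioc (-B) B := by
    intro x hx
    by_contra hxB
    exact hx (show deriv ρ (y - x) * g x = 0 by rw [hdρzero x hxB, zero_mul])
  have hsup2 : Function.support (fun z => ρ (y - z) * σ (y' - z)) ⊆ Set.Ioc (-B) B := by
    intro x hx
    by_contra hxB
    exact hx (show ρ (y - x) * σ (y' - x) = 0 by rw [hρzero x hxB, zero_mul])
  rw [← intervalIntegral.integral_eq_integral_of_support_subset hsup1,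
    ← intervalIntegral.integral_eq_integral_of_support_subset hsup2]
  have hBpos : (0:ℝ) < B := by positivity
  have hnot : ∀ x : ℝ, r < |x| → x ∉ tsupport π := fun x h hx => absurd (habs x hx) (not_le.2 h)
  have hπB : π B = 0 := by
    apply image_eq_zero_of_notMem_tsupport
    apply hnot
    rw [abs_of_pos hBpos]
    have : r ≤ |r| := le_abs_self r
    simp only [hB_def]; linarith
  have hπnB : π (-B) = 0 := by
    apply image_eq_zero_of_notMem_tsupport
    apply hnot
    rw [abs_neg, abs_of_pos hBpos]
    have : r ≤ |r| := le_abs_self r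
    simp only [hB_def]; linarith
  have hu : ∀ x ∈ Set.uIcc (-B) B, HasDerivAt g (σ (y' - x)) x := fun x _ => hgd x
  have hv : ∀ x ∈ Set.uIcc (-B) B, HasDerivAt π (deriv ρ (y - x)) x := fun x _ => hπd x
  have hdρcont : Continuous fun x => deriv ρ (y - x) :=
    (hρ.continuous_deriv le_rfl).comp (continuous_const.sub continuous_id)
  have ibp := intervalIntegral.integral_mul_deriv_eq_deriv_mul hu hv
    (hσcont'.intervalIntegrable (-B) B) (hdρcont.intervalIntegrable (-B) B)
  have hflip : ∫ x in (-B)..B, deriv ρ (y - x) * g x = ∫ x in (-B)..B, g x * deriv ρ (y - x) :=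
    intervalIntegral.integral_congr fun x _ => mul_comm _ _
  have hlast : ∫ x in (-B)..B, σ (y' - x) * π x
      = -∫ x in (-B)..B, ρ (y - x) * σ (y' - x) := by
    rw [← intervalIntegral.integral_neg]
    apply intervalIntegral.integral_congr
    intro x _
    simp only [hπ_def]
    ring
  rw [hflip, ibp, hπB, hπnB, hlast]
  ring
end

section
/- There exists a constant C>0 such that for all T>0 and r>0, the 6-dimensional Lebesgue measure of the set S(r) = { (t₁,…,t₆) ∈ [0,T]⁶ : max_{1≤i≤6} min_{j≠i} |t_i − t_j| ≤ r } satisfies Vol(S(r)) ≤ C r³ T³. -/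
open MeasureTheory

lemma key6 (r : ℝ) (t : Fin 6 → ℝ)
    (H : ∀ i, ∃ j, j ≠ i ∧ |t i - t j| ≤ r) :
    ∃ a b c a' b' c' : Fin 6, a ≠ b ∧ a ≠ c ∧ b ≠ c ∧
      ¬(a' = a ∨ a' = b ∨ a' = c) ∧ ¬(b' = a ∨ b' = b ∨ b' = c) ∧
      ¬(c' = a ∨ c' = b ∨ c' = c) ∧
      |t a - t a'| ≤ r ∧ |t b - t b'| ≤ r ∧ |t c - t c'| ≤ r := by
  set σ := Tuple.sort t with hσ
  set s : Fin 6 → ℝ := t ∘ σ with hs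
  have hm : Monotone s := Tuple.monotone_sort t
  have nb : ∀ i : Fin 6, ∃ k : Fin 6, k ≠ i ∧ |s i - s k| ≤ r := by
    intro i
    obtain ⟨j, hj, hle⟩ := H (σ i)
    refine ⟨σ.symm j, fun h => hj ?_, ?_⟩
    · rw [← Equiv.apply_symm_apply σ j, h]
    · have : s (σ.symm j) = t j := congrArg t (σ.apply_symm_apply j)
      rw [hs]; simpa [this] using hle
  have hle' : ∀ i k : Fin 6, i ≤ k → |s i - s k| ≤ r → s k - s i ≤ r := by
    intro i k hik h
    have := (abs_le.mp h).1
    linarith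
  have hle'' : ∀ i k : Fin 6, k ≤ i → |s i - s k| ≤ r → s i - s k ≤ r := by
    intro i k hik h
    have := (abs_le.mp h).2
    linarith
  have g0 : s 1 - s 0 ≤ r := by
    obtain ⟨k, hk, h⟩ := nb 0
    have h1k : (1 : Fin 6) ≤ k := by
      rw [Fin.le_def]
      have : k.val ≠ 0 := fun hv => hk (Fin.ext hv)
      omega
    have := hle' 0 k (Fin.zero_le k) h
    have := hm h1k
    linarith
  have g4 : s 5 - s 4 ≤ r := by
    obtain ⟨k, hk, h⟩ := nb 5
    have h1k : k ≤ (4 : Fin 6) := by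
      rw [Fin.le_def]
      have h5 : k.val ≠ 5 := fun hv => hk (Fin.ext hv)
      have := k.is_lt
      have h4 : (4 : Fin 6).val = 4 := rfl
      omega
    have := hle'' 5 k (le_of_lt (lt_of_le_of_lt h1k (by decide))) h
    have := hm h1k
    linarith
  have g23 : s 3 - s 2 ≤ r ∨ s 4 - s 3 ≤ r := by
    obtain ⟨k, hk, h⟩ := nb 3
    have h3 : k.val ≠ 3 := fun hv => hk (Fin.ext hv)
    rcases lt_or_gt_of_ne h3 with hlt | hgt
    · left
      have hk2 : k ≤ (2 : Fin 6) := by rw [Fin.le_def]; have h2 : (2 : Fin 6).val = 2 := rfl; omega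
      have := hle'' 3 k (le_of_lt (lt_of_le_of_lt hk2 (by decide))) h
      have := hm hk2
      linarith
    · right
      have hk4 : (4 : Fin 6) ≤ k := by rw [Fin.le_def]; have h4 : (4 : Fin 6).val = 4 := rfl; have := k.is_lt; omega
      have := hle' 3 k (le_of_lt (lt_of_lt_of_le (by decide) hk4)) h
      have := hm hk4
      linarith
  have m01 : s 0 ≤ s 1 := hm (by decide)
  have m23 : s 2 ≤ s 3 := hm (by decide)
  have m34 : s 3 ≤ s 4 := hm (by decide)
  have m45 : s 4 ≤ s 5 := hm (by decide)
  have hne : ∀ i j : Fin 6, i ≠ j → σ i ≠ σ j := fun i j hij h => hij (σ.injective h)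
  have habs : ∀ i j : Fin 6, |t (σ i) - t (σ j)| = |s i - s j| := fun i j => rfl
  rcases g23 with g2 | g3
  · refine ⟨σ 1, σ 3, σ 5, σ 0, σ 2, σ 4, hne _ _ (by decide), hne _ _ (by decide),
      hne _ _ (by decide), ?_, ?_, ?_, ?_, ?_, ?_⟩
    · push_neg
      exact ⟨hne _ _ (by decide), hne _ _ (by decide), hne _ _ (by decide)⟩
    · push_neg
      exact ⟨hne _ _ (by decide), hne _ _ (by decide), hne _ _ (by decide)⟩
    · push_neg
      exact ⟨hne _ _ (by decide), hne _ _ (by decide), hne _ _ (by decide)⟩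
    · rw [habs, abs_le]; constructor <;> linarith
    · rw [habs, abs_le]; constructor <;> linarith
    · rw [habs, abs_le]; constructor <;> linarith
  · refine ⟨σ 0, σ 3, σ 5, σ 1, σ 4, σ 4, hne _ _ (by decide), hne _ _ (by decide),
      hne _ _ (by decide), ?_, ?_, ?_, ?_, ?_, ?_⟩
    · push_neg
      exact ⟨hne _ _ (by decide), hne _ _ (by decide), hne _ _ (by decide)⟩
    · push_neg
      exact ⟨hne _ _ (by decide), hne _ _ (by decide), hne _ _ (by decide)⟩
    · push_neg
      exact ⟨hne _ _ (by decide), hne _ _ (by decide), hne _ _ (by decide)⟩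
    · rw [habs, abs_le]; constructor <;> linarith
    · rw [habs, abs_le]; constructor <;> linarith
    · rw [habs, abs_le]; constructor <;> linarith


def Bset (T r : ℝ) (a b c : Fin 6) (w : Fin 6 → Fin 6) : Set (Fin 6 → ℝ) :=
  (⋂ i, {t : Fin 6 → ℝ | ¬(i = a ∨ i = b ∨ i = c) → t i ∈ Set.Icc 0 T}) ∩
  ⋂ i, {t : Fin 6 → ℝ | (i = a ∨ i = b ∨ i = c) → t i - t (w i) ∈ Set.Icc (-r) r}

lemma Bset_meas (T r : ℝ) (a b c : Fin 6) (w : Fin 6 → Fin 6) :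
    MeasurableSet (Bset T r a b c w) := by
  apply MeasurableSet.inter <;> refine MeasurableSet.iInter fun i => ?_
  · by_cases h : (i = a ∨ i = b ∨ i = c)
    · have : {t : Fin 6 → ℝ | ¬(i = a ∨ i = b ∨ i = c) → t i ∈ Set.Icc 0 T} = Set.univ := by
        ext u; simp [h]
      rw [this]; exact MeasurableSet.univ
    · have : {t : Fin 6 → ℝ | ¬(i = a ∨ i = b ∨ i = c) → t i ∈ Set.Icc 0 T}
          = (fun u : Fin 6 → ℝ => u i) ⁻¹' Set.Icc 0 T := by
        ext u; simp [h]
      rw [this]; exact (measurable_pi_apply i) measurableSet_Icc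
  · by_cases h : (i = a ∨ i = b ∨ i = c)
    · have : {t : Fin 6 → ℝ | (i = a ∨ i = b ∨ i = c) → t i - t (w i) ∈ Set.Icc (-r) r}
          = (fun u : Fin 6 → ℝ => u i - u (w i)) ⁻¹' Set.Icc (-r) r := by
        ext u; simp [h]
      rw [this]
      exact ((measurable_pi_apply i).sub (measurable_pi_apply (w i))) measurableSet_Icc
    · have : {t : Fin 6 → ℝ | (i = a ∨ i = b ∨ i = c) → t i - t (w i) ∈ Set.Icc (-r) r}
          = Set.univ := by ext u; simp [h]
      rw [this]; exact MeasurableSet.univ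

lemma volB (T r : ℝ) (hT : 0 < T) (hr : 0 < r) (a b c : Fin 6) (w : Fin 6 → Fin 6)
    (hab : a ≠ b) (hac : a ≠ c) (hbc : b ≠ c)
    (hw : ∀ i, (i = a ∨ i = b ∨ i = c) → ¬(w i = a ∨ w i = b ∨ w i = c)) :
    volume (Bset T r a b c w) ≤ ENNReal.ofReal (8 * (r ^ 3 * T ^ 3)) := by
  classical
  set p : Fin 6 → Prop := fun i => ¬(i = a ∨ i = b ∨ i = c) with hp
  have hcard_q : Fintype.card {i : Fin 6 // ¬ p i} = 3 := by
    have e1 : {i : Fin 6 // ¬ p i} ≃ {i : Fin 6 // i = a ∨ i = b ∨ i = c} :=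
      Equiv.subtypeEquivRight fun i => not_not
    rw [Fintype.card_congr e1, Fintype.card_subtype]
    have : Finset.filter (fun i => i = a ∨ i = b ∨ i = c) Finset.univ = {a, b, c} := by
      ext i; simp
    rw [this, Finset.card_insert_of_notMem (by simp [hab, hac]),
      Finset.card_insert_of_notMem (by simp [hbc]), Finset.card_singleton]
  have hcard_p : Fintype.card {i : Fin 6 // p i} = 3 := by
    have := Fintype.card_subtype_compl (fun i : Fin 6 => p i)
    have h6 : Fintype.card (Fin 6) = 6 := by simp
    omega
  set e := MeasurableEquiv.piEquivPiSubtypeProd (fun _ : Fin 6 => ℝ) p with he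
  have hmp : MeasurePreserving e volume volume :=
    volume_preserving_piEquivPiSubtypeProd (fun _ : Fin 6 => ℝ) p
  have hB : MeasurableSet (Bset T r a b c w) := Bset_meas T r a b c w
  have hpre : MeasurableSet (e.symm ⁻¹' Bset T r a b c w) :=
    e.symm.measurable hB
  have key : volume (Bset T r a b c w) = volume (e.symm ⁻¹' Bset T r a b c w) :=
    ((hmp.symm e).measure_preimage hB.nullMeasurableSet).symm
  rw [key, Measure.volume_eq_prod, Measure.prod_apply hpre]
  -- the cube for the p-coordinates
  set X : Set ({i : Fin 6 // p i} → ℝ) := Set.univ.pi fun _ => Set.Icc (0:ℝ) T with hX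
  have hXm : MeasurableSet X := MeasurableSet.univ_pi fun _ => measurableSet_Icc
  have hesymm : ∀ (x : {i : Fin 6 // p i} → ℝ) (y : {i : Fin 6 // ¬ p i} → ℝ) (i : Fin 6),
      e.symm (x, y) i = if h : p i then x ⟨i, h⟩ else y ⟨i, h⟩ := fun _ _ _ => rfl
  have slice_bound : ∀ x : {i : Fin 6 // p i} → ℝ,
      volume (Prod.mk x ⁻¹' (e.symm ⁻¹' Bset T r a b c w)) ≤
        X.indicator (fun _ => ENNReal.ofReal (2 * r) ^ 3) x := by
    intro x
    by_cases hx : x ∈ X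
    · rw [Set.indicator_of_mem hx]
      have hsub : Prod.mk x ⁻¹' (e.symm ⁻¹' Bset T r a b c w) ⊆
          Set.univ.pi fun j : {i : Fin 6 // ¬ p i} =>
            Set.Icc (x ⟨w j.1, hw j.1 (not_not.mp j.2)⟩ - r)
                    (x ⟨w j.1, hw j.1 (not_not.mp j.2)⟩ + r) := by
        intro y hy j _
        have hy2 := hy.2
        have hj := Set.mem_iInter.mp hy2 j.1 (not_not.mp j.2)
        simp only [Set.mem_Icc] at hj ⊢
        have h1 : e.symm (x, y) j.1 = y j := by
          rw [hesymm]; rw [dif_neg j.2]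
        have h2 : e.symm (x, y) (w j.1) = x ⟨w j.1, hw j.1 (not_not.mp j.2)⟩ := by
          rw [hesymm]; rw [dif_pos (hw j.1 (not_not.mp j.2))]
        rw [h1, h2] at hj
        constructor <;> linarith [hj.1, hj.2]
      refine le_trans (measure_mono hsub) ?_
      rw [volume_pi, Measure.pi_pi]
      have : ∀ j : {i : Fin 6 // ¬ p i},
          volume (Set.Icc (x ⟨w j.1, hw j.1 (not_not.mp j.2)⟩ - r)
            (x ⟨w j.1, hw j.1 (not_not.mp j.2)⟩ + r)) = ENNReal.ofReal (2 * r) := by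
        intro j
        rw [Real.volume_Icc]
        congr 1
        ring
      rw [Finset.prod_congr rfl fun j _ => this j, Finset.prod_const, Finset.card_univ, hcard_q]
    · rw [Set.indicator_of_notMem hx]
      have : Prod.mk x ⁻¹' (e.symm ⁻¹' Bset T r a b c w) = ∅ := by
        rw [Set.eq_empty_iff_forall_notMem]
        intro y hy
        simp only [hX, Set.mem_univ_pi, not_forall] at hx
        obtain ⟨j, hj⟩ := hx
        have hy1 := Set.mem_iInter.mp hy.1 j.1 j.2
        have h1 : e.symm (x, y) j.1 = x j := by
          rw [hesymm]; rw [dif_pos j.2]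
        rw [h1] at hy1
        exact hj hy1
      rw [this]
      simp
  have hXvol : volume X = ENNReal.ofReal T ^ 3 := by
    rw [hX, volume_pi, Measure.pi_pi]
    simp only [Real.volume_Icc, sub_zero]
    rw [Finset.prod_const, Finset.card_univ, hcard_p]
  calc ∫⁻ x, volume (Prod.mk x ⁻¹' (e.symm ⁻¹' Bset T r a b c w)) ∂volume
      ≤ ∫⁻ x, X.indicator (fun _ => ENNReal.ofReal (2 * r) ^ 3) x ∂volume :=
        lintegral_mono slice_bound
    _ = ENNReal.ofReal (2 * r) ^ 3 * volume X := lintegral_indicator_const hXm _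
    _ = ENNReal.ofReal (8 * (r ^ 3 * T ^ 3)) := by
        rw [hXvol, ← ENNReal.ofReal_pow (by positivity), ← ENNReal.ofReal_pow hT.le,
          ← ENNReal.ofReal_mul (by positivity)]
        congr 1
        ring


lemma hw_of (a b c a' b' c' : Fin 6) (hab : a ≠ b) (hac : a ≠ c)
    (ha' : ¬(a' = a ∨ a' = b ∨ a' = c)) (hb' : ¬(b' = a ∨ b' = b ∨ b' = c))
    (hc' : ¬(c' = a ∨ c' = b ∨ c' = c)) :
    ∀ i, (i = a ∨ i = b ∨ i = c) →
      ¬((if i = a then a' else if i = b then b' else c') = a ∨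
        (if i = a then a' else if i = b then b' else c') = b ∨
        (if i = a then a' else if i = b then b' else c') = c) := by
  intro i hi
  rcases hi with h | h | h
  · rw [if_pos h]; exact ha'
  · rw [if_neg (fun hh => hab (hh.symm.trans h)), if_pos h]; exact hb'
  · rw [if_neg (fun hh => hac (hh.symm.trans h))]
    by_cases hcb : i = b
    · rw [if_pos hcb]; exact hb'
    · rw [if_neg hcb]; exact hc'

/-- There is a constant `C > 0` such that for all `T > 0`, `r > 0`,
the Lebesgue measure (in `ℝ⁶`) of
`S(r) = {(t₁,…,t₆) ∈ [0,T]⁶ : max_i min_{j ≠ i} |t_i − t_j| ≤ r}`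
(the set of 6-tuples in which every coordinate lies within `r` of another coordinate)
is at most `C r³ T³`. -/
theorem stmt19 : ∃ C : ℝ, 0 < C ∧ ∀ T : ℝ, 0 < T → ∀ r : ℝ, 0 < r →
    volume {t : Fin 6 → ℝ | (∀ i, t i ∈ Set.Icc (0:ℝ) T) ∧
      ∀ i, ∃ j, j ≠ i ∧ |t i - t j| ≤ r}
      ≤ ENNReal.ofReal (C * r ^ 3 * T ^ 3) := by
  classical
  refine ⟨373248, by norm_num, fun T hT r hr => ?_⟩
  set G : (Fin 6 × Fin 6 × Fin 6 × Fin 6 × Fin 6 × Fin 6) → Set (Fin 6 → ℝ) := fun z =>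
    if (z.1 ≠ z.2.1 ∧ z.1 ≠ z.2.2.1 ∧ z.2.1 ≠ z.2.2.1 ∧
        ¬(z.2.2.2.1 = z.1 ∨ z.2.2.2.1 = z.2.1 ∨ z.2.2.2.1 = z.2.2.1) ∧
        ¬(z.2.2.2.2.1 = z.1 ∨ z.2.2.2.2.1 = z.2.1 ∨ z.2.2.2.2.1 = z.2.2.1) ∧
        ¬(z.2.2.2.2.2 = z.1 ∨ z.2.2.2.2.2 = z.2.1 ∨ z.2.2.2.2.2 = z.2.2.1))
    then Bset T r z.1 z.2.1 z.2.2.1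
      (fun i => if i = z.1 then z.2.2.2.1 else if i = z.2.1 then z.2.2.2.2.1 else z.2.2.2.2.2)
    else ∅ with hG
  have cover : {t : Fin 6 → ℝ | (∀ i, t i ∈ Set.Icc (0:ℝ) T) ∧
      ∀ i, ∃ j, j ≠ i ∧ |t i - t j| ≤ r} ⊆ ⋃ z, G z := by
    intro t ht
    obtain ⟨a, b, c, a', b', c', hab, hac, hbc, ha', hb', hc', da, db, dc⟩ := key6 r t ht.2
    refine Set.mem_iUnion.mpr ⟨(a, b, c, a', b', c'), ?_⟩
    rw [hG]
    simp only
    rw [if_pos ⟨hab, hac, hbc, ha', hb', hc'⟩]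
    constructor
    · exact Set.mem_iInter.mpr fun i => fun _ => ht.1 i
    · refine Set.mem_iInter.mpr fun i => fun hi => ?_
      show t i - t (if i = a then a' else if i = b then b' else c') ∈ Set.Icc (-r) r
      rcases hi with h | h | h
      · rw [if_pos h, h]
        exact Set.mem_Icc.mpr (abs_le.mp da)
      · rw [if_neg (fun hh => hab (hh.symm.trans h)), if_pos h, h]
        exact Set.mem_Icc.mpr (abs_le.mp db)
      · rw [if_neg (fun hh => hac (hh.symm.trans h)), if_neg (fun hh => hbc (hh.symm.trans h)), h]
        exact Set.mem_Icc.mpr (abs_le.mp dc)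
  have bound : ∀ z, volume (G z) ≤ ENNReal.ofReal (8 * (r ^ 3 * T ^ 3)) := by
    intro z
    rw [hG]
    by_cases h : (z.1 ≠ z.2.1 ∧ z.1 ≠ z.2.2.1 ∧ z.2.1 ≠ z.2.2.1 ∧
        ¬(z.2.2.2.1 = z.1 ∨ z.2.2.2.1 = z.2.1 ∨ z.2.2.2.1 = z.2.2.1) ∧
        ¬(z.2.2.2.2.1 = z.1 ∨ z.2.2.2.2.1 = z.2.1 ∨ z.2.2.2.2.1 = z.2.2.1) ∧
        ¬(z.2.2.2.2.2 = z.1 ∨ z.2.2.2.2.2 = z.2.1 ∨ z.2.2.2.2.2 = z.2.2.1))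
    · simp only [if_pos h]
      obtain ⟨hab, hac, hbc, ha', hb', hc'⟩ := h
      exact volB T r hT hr _ _ _ _ hab hac hbc (hw_of _ _ _ _ _ _ hab hac ha' hb' hc')
    · simp only [if_neg h]
      simp
  calc volume {t : Fin 6 → ℝ | (∀ i, t i ∈ Set.Icc (0:ℝ) T) ∧
      ∀ i, ∃ j, j ≠ i ∧ |t i - t j| ≤ r}
      ≤ volume (⋃ z, G z) := measure_mono cover
    _ ≤ ∑' z, volume (G z) := measure_iUnion_le _
    _ = ∑ z, volume (G z) := tsum_fintype _
    _ ≤ ∑ _z : Fin 6 × Fin 6 × Fin 6 × Fin 6 × Fin 6 × Fin 6,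
          ENNReal.ofReal (8 * (r ^ 3 * T ^ 3)) := Finset.sum_le_sum fun z _ => bound z
    _ = 46656 * ENNReal.ofReal (8 * (r ^ 3 * T ^ 3)) := by
        rw [Finset.sum_const, Finset.card_univ]
        have hcard : Fintype.card (Fin 6 × Fin 6 × Fin 6 × Fin 6 × Fin 6 × Fin 6) = 46656 := by
          simp
        rw [hcard, nsmul_eq_mul]
        norm_num
    _ = ENNReal.ofReal (373248 * r ^ 3 * T ^ 3) := by
        rw [show (46656 : ENNReal) = ENNReal.ofReal (46656 : ℝ) from
            (ENNReal.ofReal_ofNat _).symm,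
          ← ENNReal.ofReal_mul (by norm_num)]
        congr 1
        ring
end
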